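/- Define K(I₁,R₁,I₂,R₂) = x₁f(I₁*,I₁) + 2y₁f(2R₁*, R₁+R₁*) + x₂f(I₂*,I₂) + 2y₂f(2R₂*, R₂+R₂*) with the parameters x₁ = (ϱ₁+ϱ₂)/(ϱ₂λ₁*n), y₁ = ϱ₂/(ϱ₁λ₂*n), x₂ = (ϱ₁+ϱ₂)/(ϱ₁λ₂*n), y₂ = ϱ₁/(ϱ₂λ₁*n). Then the derivative of K along trajectories of the mean-field IRIR system equals −(1/n)·( δ₁²/(R₁ + ϱ₂/λ₂*)·(I₁ + (ϱ₂/ϱ₁)I₂) + δ₂²/(R₂ + ϱ₁/λ₁*)·(I₂ + (ϱ₁/ϱ₂)I₁) + (δ₁+δ₂)² ), where δᵢ = Rᵢ − Rᵢ*, and hence is nonpositive for positive states. -/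

import Mathlib

set_option maxHeartbeats 1000000


noncomputable def f (xs x : ℝ) : ℝ := xs * (x / xs - Real.log (x / xs) - 1)

/-- The shifted Lyapunov function `K`. -/
noncomputable def K (x1 y1 x2 y2 I1s R1s I2s R2s I1 R1 I2 R2 : ℝ) : ℝ :=
  x1 * f I1s I1 + 2 * y1 * f (2 * R1s) (R1 + R1s) +
    x2 * f I2s I2 + 2 * y2 * f (2 * R2s) (R2 + R2s)

lemma hasDerivAt_f (xs x : ℝ) (hxs : xs ≠ 0) (hx : x ≠ 0) :
    HasDerivAt (f xs) (1 - xs / x) x := by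
  have h1 : HasDerivAt (fun z : ℝ => z / xs) (1 / xs) x := by
    simpa using (hasDerivAt_id x).div_const xs
  have hdiv : x / xs ≠ 0 := div_ne_zero hx hxs
  have hlog : HasDerivAt (fun z : ℝ => Real.log (z / xs)) ((1 / xs) / (x / xs)) x :=
    h1.log hdiv
  have h := (((h1.sub hlog).sub_const 1).const_mul xs)
  have heq : xs * (1 / xs - 1 / xs / (x / xs)) = 1 - xs / x := by
    field_simp
  rw [heq] at h
  exact h

theorem stmt_7 (lam1 lam2 rho1 rho2 n : ℝ)
    (hlam1 : 0 < lam1) (hlam2 : 0 < lam2) (hrho1 : 0 < rho1) (hrho2 : 0 < rho2)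
    (hn : 0 < n)
    (I1s R1s I2s R2s x1 y1 x2 y2 : ℝ)
    (hR1s : R1s = rho2 / lam2) (hR2s : R2s = rho1 / lam1)
    (hI1s : I1s = (n - R1s - R2s) * (rho2 / (rho1 + rho2)))
    (hI2s : I2s = (n - R1s - R2s) * (rho1 / (rho1 + rho2)))
    (hthr : R1s + R2s < n)
    (hx1 : x1 = (rho1 + rho2) / (rho2 * lam1 * n))
    (hy1 : y1 = rho2 / (rho1 * lam2 * n))
    (hx2 : x2 = (rho1 + rho2) / (rho1 * lam2 * n))
    (hy2 : y2 = rho1 / (rho2 * lam1 * n))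
    (I1 R1 I2 R2 : ℝ)
    (hI1 : 0 < I1) (hR1 : 0 < R1) (hI2 : 0 < I2) (hR2 : 0 < R2)
    (hsum : I1 + I2 + R1 + R2 = n) :
    deriv (fun z => K x1 y1 x2 y2 I1s R1s I2s R2s z R1 I2 R2) I1 *
        (lam1 * I1 * R2 - rho1 * I1) +
      deriv (fun z => K x1 y1 x2 y2 I1s R1s I2s R2s I1 z I2 R2) R1 *
        (rho1 * I1 - lam2 * I2 * R1) +
      deriv (fun z => K x1 y1 x2 y2 I1s R1s I2s R2s I1 R1 z R2) I2 *
        (lam2 * I2 * R1 - rho2 * I2) +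
      deriv (fun z => K x1 y1 x2 y2 I1s R1s I2s R2s I1 R1 I2 z) R2 *
        (rho2 * I2 - lam1 * I1 * R2) =
      -(1 / n) * ((R1 - R1s) ^ 2 / (R1 + rho2 / lam2) * (I1 + (rho2 / rho1) * I2) +
        (R2 - R2s) ^ 2 / (R2 + rho1 / lam1) * (I2 + (rho1 / rho2) * I1) +
        ((R1 - R1s) + (R2 - R2s)) ^ 2) ∧
    -(1 / n) * ((R1 - R1s) ^ 2 / (R1 + rho2 / lam2) * (I1 + (rho2 / rho1) * I2) +
        (R2 - R2s) ^ 2 / (R2 + rho1 / lam1) * (I2 + (rho1 / rho2) * I1) +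
        ((R1 - R1s) + (R2 - R2s)) ^ 2) ≤ 0 := by
  have hR1s' : 0 < R1s := by rw [hR1s]; positivity
  have hR2s' : 0 < R2s := by rw [hR2s]; positivity
  have hI1s' : 0 < I1s := by
    rw [hI1s]; apply mul_pos (by linarith) (by positivity)
  have hI2s' : 0 < I2s := by
    rw [hI2s]; apply mul_pos (by linarith) (by positivity)
  have hd1 : deriv (fun z => K x1 y1 x2 y2 I1s R1s I2s R2s z R1 I2 R2) I1
      = x1 * (1 - I1s / I1) := by
    have h : HasDerivAt (fun z => K x1 y1 x2 y2 I1s R1s I2s R2s z R1 I2 R2)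
        (x1 * (1 - I1s / I1)) I1 := by
      unfold K
      exact ((((hasDerivAt_f I1s I1 hI1s'.ne' hI1.ne').const_mul x1).add_const
        _).add_const _).add_const _
    exact h.deriv
  have hd2 : deriv (fun z => K x1 y1 x2 y2 I1s R1s I2s R2s I1 z I2 R2) R1
      = 2 * y1 * (1 - 2 * R1s / (R1 + R1s)) := by
    have hg' := (hasDerivAt_f (2 * R1s) (R1 + R1s) (by positivity) (by positivity)).comp
        R1 ((hasDerivAt_id R1).add_const R1s)
    have hg : HasDerivAt (fun z : ℝ => f (2 * R1s) (z + R1s))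
        ((1 - 2 * R1s / (R1 + R1s)) * 1) R1 := by
      exact hg'
    have h : HasDerivAt (fun z => K x1 y1 x2 y2 I1s R1s I2s R2s I1 z I2 R2)
        (2 * y1 * ((1 - 2 * R1s / (R1 + R1s)) * 1)) R1 := by
      unfold K
      exact ((((hg.const_mul (2 * y1)).const_add _).add_const _).add_const _)
    simpa using h.deriv
  have hd3 : deriv (fun z => K x1 y1 x2 y2 I1s R1s I2s R2s I1 R1 z R2) I2
      = x2 * (1 - I2s / I2) := by
    have h : HasDerivAt (fun z => K x1 y1 x2 y2 I1s R1s I2s R2s I1 R1 z R2)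
        (x2 * (1 - I2s / I2)) I2 := by
      unfold K
      exact ((((hasDerivAt_f I2s I2 hI2s'.ne' hI2.ne').const_mul x2).const_add
        _).add_const _)
    exact h.deriv
  have hd4 : deriv (fun z => K x1 y1 x2 y2 I1s R1s I2s R2s I1 R1 I2 z) R2
      = 2 * y2 * (1 - 2 * R2s / (R2 + R2s)) := by
    have hg' := (hasDerivAt_f (2 * R2s) (R2 + R2s) (by positivity) (by positivity)).comp
        R2 ((hasDerivAt_id R2).add_const R2s)
    have hg : HasDerivAt (fun z : ℝ => f (2 * R2s) (z + R2s))
        ((1 - 2 * R2s / (R2 + R2s)) * 1) R2 := by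
      exact hg'
    have h : HasDerivAt (fun z => K x1 y1 x2 y2 I1s R1s I2s R2s I1 R1 I2 z)
        (2 * y2 * ((1 - 2 * R2s / (R2 + R2s)) * 1)) R2 := by
      unfold K
      exact ((hg.const_mul (2 * y2)).const_add _)
    simpa using h.deriv
  constructor
  · rw [hd1, hd2, hd3, hd4]
    subst hR1s hR2s hI1s hI2s hx1 hy1 hx2 hy2
    subst hsum
    have h12 : rho1 + rho2 ≠ 0 := by positivity
    have hNn : I1 + I2 + R1 + R2 ≠ 0 := by positivity
    have hDA : R1 + rho2 / lam2 ≠ 0 := by positivity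
    have hDB : R2 + rho1 / lam1 ≠ 0 := by positivity
    have hA1 : (rho1 + rho2) / (rho2 * lam1 * (I1 + I2 + R1 + R2)) *
        (1 - (I1 + I2 + R1 + R2 - rho2 / lam2 - rho1 / lam1) * (rho2 / (rho1 + rho2)) / I1) *
        (lam1 * I1 * R2 - rho1 * I1) =
        (rho1 + rho2) / (rho2 * (I1 + I2 + R1 + R2)) *
          (I1 - (I1 + I2 + R1 + R2 - rho2 / lam2 - rho1 / lam1) * (rho2 / (rho1 + rho2))) *
          (R2 - rho1 / lam1) := by
      field_simp
    have hA3 : (rho1 + rho2) / (rho1 * lam2 * (I1 + I2 + R1 + R2)) *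
        (1 - (I1 + I2 + R1 + R2 - rho2 / lam2 - rho1 / lam1) * (rho1 / (rho1 + rho2)) / I2) *
        (lam2 * I2 * R1 - rho2 * I2) =
        (rho1 + rho2) / (rho1 * (I1 + I2 + R1 + R2)) *
          (I2 - (I1 + I2 + R1 + R2 - rho2 / lam2 - rho1 / lam1) * (rho1 / (rho1 + rho2))) *
          (R1 - rho2 / lam2) := by
      field_simp
    have hA2 : 2 * (rho2 / (rho1 * lam2 * (I1 + I2 + R1 + R2))) *
        (1 - 2 * (rho2 / lam2) / (R1 + rho2 / lam2)) * (rho1 * I1 - lam2 * I2 * R1) =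
        (R1 - rho2 / lam2) / (I1 + I2 + R1 + R2) * (I1 - (rho2 / rho1) * I2) -
          1 / (I1 + I2 + R1 + R2) *
            ((R1 - rho2 / lam2) ^ 2 / (R1 + rho2 / lam2) * (I1 + (rho2 / rho1) * I2)) := by
      field_simp
      ring
    have hA4 : 2 * (rho1 / (rho2 * lam1 * (I1 + I2 + R1 + R2))) *
        (1 - 2 * (rho1 / lam1) / (R2 + rho1 / lam1)) * (rho2 * I2 - lam1 * I1 * R2) =
        (R2 - rho1 / lam1) / (I1 + I2 + R1 + R2) * (I2 - (rho1 / rho2) * I1) -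
          1 / (I1 + I2 + R1 + R2) *
            ((R2 - rho1 / lam1) ^ 2 / (R2 + rho1 / lam1) * (I2 + (rho1 / rho2) * I1)) := by
      field_simp
      ring
    have hF : (rho1 + rho2) / (rho2 * (I1 + I2 + R1 + R2)) *
          (I1 - (I1 + I2 + R1 + R2 - rho2 / lam2 - rho1 / lam1) * (rho2 / (rho1 + rho2))) *
          (R2 - rho1 / lam1) +
        (rho1 + rho2) / (rho1 * (I1 + I2 + R1 + R2)) *
          (I2 - (I1 + I2 + R1 + R2 - rho2 / lam2 - rho1 / lam1) * (rho1 / (rho1 + rho2))) *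
          (R1 - rho2 / lam2) +
        (R1 - rho2 / lam2) / (I1 + I2 + R1 + R2) * (I1 - (rho2 / rho1) * I2) +
        (R2 - rho1 / lam1) / (I1 + I2 + R1 + R2) * (I2 - (rho1 / rho2) * I1) =
        -(1 / (I1 + I2 + R1 + R2)) * ((R1 - rho2 / lam2) + (R2 - rho1 / lam1)) ^ 2 := by
      field_simp
      ring
    linear_combination hA1 + hA2 + hA3 + hA4 + hF
  · rw [neg_mul]
    apply neg_nonpos.mpr
    have h1 : 0 < R1 + rho2 / lam2 := by positivity
    have h2 : 0 < R2 + rho1 / lam1 := by positivity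
    positivity
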